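/- Let μ, b ∈ ℝ and σ ≥ 0, and let N(μ, σ²) denote the Gaussian measure on ℝ with mean μ and variance σ². Then ∫ max(0, x − b) dN(μ, σ²)(x) ≤ max(0, μ − b) + σ / √(2π). -/

import Mathlib

open ProbabilityTheory MeasureTheory Real Set Filter
open scoped NNReal ENNReal Topology

lemma ei_aux_integral_Ioi {β : ℝ} (hβ : 0 < β) :
    ∫ r in Set.Ioi (0:ℝ), r * Real.exp (-β * r ^ 2) = (2 * β)⁻¹ := by
  have A : ∀ x : ℝ, HasDerivAt (fun x : ℝ => -(2 * β)⁻¹ * Real.exp (-β * x ^ 2))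
      (x * Real.exp (-β * x ^ 2)) x := by
    intro x
    convert ((hasDerivAt_pow 2 x).const_mul (-β)).exp.const_mul (-(2 * β)⁻¹) using 1
    · rfl
    · rfl
    · field_simp
      ring
  have B : Tendsto (fun y : ℝ => -(2 * β)⁻¹ * Real.exp (-β * y ^ 2))
      atTop (nhds (-(2 * β)⁻¹ * 0)) := by
    refine Tendsto.const_mul _ ?_
    exact Real.tendsto_exp_atBot.comp
      ((tendsto_pow_atTop two_ne_zero).const_mul_atTop_of_neg (neg_lt_zero.2 hβ))
  have := MeasureTheory.integral_Ioi_of_hasDerivAt_of_tendsto' (a := 0) (fun x _ => A x)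
    (integrable_mul_exp_neg_mul_sq hβ).integrableOn B
  rw [this]
  norm_num

lemma ei_aux_max_eq_indicator (C β : ℝ) :
    (fun y : ℝ => max 0 y * (C * Real.exp (-β * y ^ 2))) =
      Set.indicator (Set.Ioi (0:ℝ)) (fun y => y * (C * Real.exp (-β * y ^ 2))) := by
  funext y
  by_cases hy : 0 < y
  · rw [Set.indicator_of_mem (Set.mem_Ioi.2 hy), max_eq_right hy.le]
  · rw [Set.indicator_of_notMem (by simpa using hy), max_eq_left (not_lt.1 hy), zero_mul]

lemma ei_aux_integrable (C : ℝ) {β : ℝ} (hβ : 0 < β) :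
    Integrable (fun y : ℝ => max 0 y * (C * Real.exp (-β * y ^ 2))) := by
  rw [ei_aux_max_eq_indicator]
  rw [integrable_indicator_iff measurableSet_Ioi]
  have : Integrable (fun y : ℝ => C * (y * Real.exp (-β * y ^ 2))) :=
    (integrable_mul_exp_neg_mul_sq hβ).const_mul C
  refine (this.integrableOn).congr_fun (fun y _ => by ring) measurableSet_Ioi

lemma ei_aux_integral (C : ℝ) {β : ℝ} (hβ : 0 < β) :
    ∫ y : ℝ, max 0 y * (C * Real.exp (-β * y ^ 2)) = C * (2 * β)⁻¹ := by
  rw [ei_aux_max_eq_indicator, integral_indicator measurableSet_Ioi]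
  have : ∀ y : ℝ, y * (C * Real.exp (-β * y ^ 2)) = C * (y * Real.exp (-β * y ^ 2)) := by
    intro y; ring
  simp_rw [this]
  rw [integral_const_mul, ei_aux_integral_Ioi hβ]

lemma ei_pdf_eq (μ : ℝ) (v : ℝ≥0) (x : ℝ) :
    gaussianPDFReal μ v x = (Real.sqrt (2 * Real.pi * v))⁻¹ *
      Real.exp (-(2 * (v:ℝ))⁻¹ * (x - μ) ^ 2) := by
  rw [gaussianPDFReal]
  congr 1
  rw [Real.exp_eq_exp]
  by_cases hv : (v : ℝ) = 0
  · simp [hv]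
  · field_simp

/-- Integrability of `max 0 (x - μ)` times the gaussian pdf. -/
lemma ei_integrable_shift (μ : ℝ) {v : ℝ≥0} (hv : v ≠ 0) :
    Integrable (fun x : ℝ => max 0 (x - μ) * gaussianPDFReal μ v x) := by
  have hvpos : (0:ℝ) < v := by positivity
  have hβ : (0:ℝ) < (2 * (v:ℝ))⁻¹ := by positivity
  have h := (ei_aux_integrable ((Real.sqrt (2 * Real.pi * v))⁻¹) hβ).comp_sub_right μ
  refine h.congr (Filter.Eventually.of_forall fun x => ?_)
  simp only [ei_pdf_eq]

lemma ei_integral_shift (μ : ℝ) {v : ℝ≥0} (hv : v ≠ 0) :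
    ∫ x : ℝ, max 0 (x - μ) * gaussianPDFReal μ v x =
      Real.sqrt v / Real.sqrt (2 * Real.pi) := by
  have hvpos : (0:ℝ) < v := by positivity
  have hβ : (0:ℝ) < (2 * (v:ℝ))⁻¹ := by positivity
  have h1 : ∀ x : ℝ, max 0 (x - μ) * gaussianPDFReal μ v x =
      (fun y => max 0 y * ((Real.sqrt (2 * Real.pi * v))⁻¹ *
        Real.exp (-(2 * (v:ℝ))⁻¹ * y ^ 2))) (x - μ) := by
    intro x; rw [ei_pdf_eq]
  simp_rw [h1]
  rw [integral_sub_right_eq_self (μ := volume)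
    (fun y => max 0 y * ((Real.sqrt (2 * Real.pi * v))⁻¹ *
      Real.exp (-(2 * (v:ℝ))⁻¹ * y ^ 2))) μ]
  rw [ei_aux_integral _ hβ]
  have h2 : (2 * (2 * (v:ℝ))⁻¹)⁻¹ = v := by field_simp
  rw [h2]
  rw [Real.sqrt_mul (by positivity : (0:ℝ) ≤ 2 * Real.pi)]
  have hs : (0:ℝ) < Real.sqrt v := Real.sqrt_pos.2 hvpos
  have hp : (0:ℝ) < Real.sqrt (2 * Real.pi) := Real.sqrt_pos.2 (by positivity)
  have key : (v:ℝ) * (Real.sqrt (v:ℝ))⁻¹ = Real.sqrt v := by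
    field_simp
    exact (Real.sq_sqrt hvpos.le).symm
  rw [mul_inv]
  conv_rhs => rw [← key]
  ring

/-- The expected improvement of a Gaussian `N(μ, σ²)` (`σ ≥ 0`)
over an incumbent `b` is at most `max(0, μ − b) + σ / √(2π)`. -/
theorem expected_improvement_upper_bound (μ b σ : ℝ) (hσ : 0 ≤ σ) :
    ∫ x, max 0 (x - b) ∂(gaussianReal μ ⟨σ ^ 2, sq_nonneg σ⟩) ≤
      max 0 (μ - b) + σ / Real.sqrt (2 * Real.pi) := by
  set v : ℝ≥0 := ⟨σ ^ 2, sq_nonneg σ⟩ with hv_def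
  by_cases hσ0 : σ = 0
  · have hv0 : v = 0 := by
      ext; simp [hv_def, hσ0]; rfl
    rw [hv0, gaussianReal_zero_var, integral_dirac, hσ0]
    simp
  · have hσpos : 0 < σ := lt_of_le_of_ne hσ (Ne.symm hσ0)
    have hv : v ≠ 0 := by
      intro h
      have : (v : ℝ) = 0 := by rw [h]; simp
      rw [hv_def] at this
      change σ ^ 2 = 0 at this
      exact hσ0 (by nlinarith)

    have hvσ : (v : ℝ) = σ ^ 2 := rfl
    -- rewrite the measure as withDensity
    have hmeas : gaussianReal μ v =
        volume.withDensity (fun x => ((gaussianPDFReal μ v x).toNNReal : ℝ≥0∞)) := by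
      rw [gaussianReal_of_var_ne_zero _ hv]
      rfl
    have hf_meas : Measurable (fun x => (gaussianPDFReal μ v x).toNNReal) :=
      (measurable_gaussianPDFReal μ v).real_toNNReal
    -- integrability of the dominating function
    have hint2 : Integrable (fun x : ℝ => max 0 (x - μ)) (gaussianReal μ v) := by
      rw [hmeas, integrable_withDensity_iff_integrable_smul hf_meas]
      refine (ei_integrable_shift μ hv).congr (Filter.Eventually.of_forall fun x => ?_)
      simp only [NNReal.smul_def, smul_eq_mul,
        Real.coe_toNNReal _ (gaussianPDFReal_nonneg μ v x)]
      ring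
    have hint : Integrable (fun x : ℝ => max 0 (μ - b) + max 0 (x - μ)) (gaussianReal μ v) :=
      (integrable_const _).add hint2
    have hpt : ∀ x : ℝ, max 0 (x - b) ≤ max 0 (μ - b) + max 0 (x - μ) := by
      intro x
      refine max_le (by positivity) ?_
      have : x - b = (μ - b) + (x - μ) := by ring
      rw [this]
      exact add_le_add (le_max_right _ _) (le_max_right _ _)
    have hmono := integral_mono_of_nonneg (μ := gaussianReal μ v)
      (Filter.Eventually.of_forall fun x => le_max_left 0 (x - b)) hint
      (Filter.Eventually.of_forall hpt)
    refine hmono.trans ?_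
    rw [integral_add (integrable_const _) hint2, integral_const]
    have hprob : IsProbabilityMeasure (gaussianReal μ v) := inferInstance
    rw [probReal_univ, one_smul]
    have hshift : ∫ x, max 0 (x - μ) ∂(gaussianReal μ v) =
        Real.sqrt v / Real.sqrt (2 * Real.pi) := by
      rw [hmeas, integral_withDensity_eq_integral_smul hf_meas]
      rw [← ei_integral_shift μ hv]
      congr 1
      funext x
      simp only [NNReal.smul_def, smul_eq_mul,
        Real.coe_toNNReal _ (gaussianPDFReal_nonneg μ v x)]
      ring
    rw [hshift, hvσ, Real.sqrt_sq hσ]
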